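/- arXiv:1210.3056 — 4 statements merged into one kernel-verified Lean document; each statement's English description precedes it below -/
import Mathlib

section
/- Let 𝔤 be a finite-dimensional simple real Lie algebra equipped with an ad-invariant inner product ⟨·,·⟩. Then every alternating trilinear form T : 𝔤 × 𝔤 × 𝔤 → ℝ with the property that for every X ∈ 𝔤 there exists V ∈ 𝔤 with T(X,Y,Z) = ⟨[V,Y],Z⟩ for all Y,Z ∈ 𝔤, is a real multiple of the Cartan 3-form: there exists c ∈ ℝ with T(X,Y,Z) = c·⟨[X,Y],Z⟩ for all X,Y,Z ∈ 𝔤. -/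
set_option linter.unusedSectionVars false

namespace SimpleLieSkewHolonomyAux

variable {L : Type} [LieRing L] [LieAlgebra ℝ L]

theorem center_triv [LieAlgebra.IsSimple ℝ L] (V : L) (hV : ∀ Y : L, ⁅V, Y⁆ = 0) : V = 0 := by
  have hmem : V ∈ LieAlgebra.center ℝ L := by
    intro x
    rw [← lie_skew, hV x, neg_zero]
  rcases LieAlgebra.IsSimple.eq_bot_or_eq_top (LieAlgebra.center ℝ L) with h | h
  · rw [h] at hmem
    exact (LieSubmodule.mem_bot _).mp hmem
  · exact absurd ((LieAlgebra.isLieAbelian_iff_center_eq_top ℝ L).mpr h)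
      (LieAlgebra.IsSimple.non_abelian ℝ)

theorem nontriv [LieAlgebra.IsSimple ℝ L] : Nontrivial L := by
  rcases subsingleton_or_nontrivial L with h | h
  · exact absurd ⟨fun x m => Subsingleton.elim _ _⟩
      (LieAlgebra.IsSimple.non_abelian (R := ℝ) (L := L))
  · exact h

theorem perfect [LieAlgebra.IsSimple ℝ L] :
    (⊤ : Submodule ℝ L) = Submodule.span ℝ {m : L | ∃ x : L, ∃ n : L, ⁅x, n⁆ = m} := by
  rcases LieAlgebra.IsSimple.eq_bot_or_eq_top
      (⁅(⊤ : LieIdeal ℝ L), (⊤ : LieIdeal ℝ L)⁆ : LieIdeal ℝ L) with h | h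
  · exfalso
    apply LieAlgebra.IsSimple.non_abelian (R := ℝ) (L := L)
    constructor
    intro x m
    have : (⁅x, m⁆ : L) ∈ (⁅(⊤ : LieIdeal ℝ L), (⊤ : LieIdeal ℝ L)⁆ : LieIdeal ℝ L) :=
      LieSubmodule.lie_mem_lie (LieSubmodule.mem_top x) (LieSubmodule.mem_top m)
    rw [h] at this
    exact (LieSubmodule.mem_bot _).mp this
  · have h2 := LieSubmodule.lieIdeal_oper_eq_linear_span'
      (R := ℝ) (L := L) (I := (⊤ : LieIdeal ℝ L)) (N := (⊤ : LieIdeal ℝ L))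
    rw [h] at h2
    rw [LieSubmodule.top_toSubmodule] at h2
    rw [h2]
    congr 1
    ext m
    simp

theorem nondeg (B : L →ₗ[ℝ] L →ₗ[ℝ] ℝ) (hBpos : ∀ X : L, X ≠ 0 → 0 < B X X)
    (W : L) (h : ∀ Z : L, B W Z = 0) : W = 0 := by
  by_contra hW
  exact (hBpos W hW).ne' (h W)

theorem scalar_of_P [FiniteDimensional ℝ L] [LieAlgebra.IsSimple ℝ L]
    (B : L →ₗ[ℝ] L →ₗ[ℝ] ℝ)
    (hBsymm : ∀ X Y : L, B X Y = B Y X)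
    (hBpos : ∀ X : L, X ≠ 0 → 0 < B X X)
    (hBinv : ∀ X Y Z : L, B ⁅X, Y⁆ Z + B Y ⁅X, Z⁆ = 0)
    (A : L →ₗ[ℝ] L) (hP : ∀ X Y : L, ⁅A X, Y⁆ = ⁅X, A Y⁆) :
    ∃ c : ℝ, ∀ X : L, A X = c • X := by
  -- invariance variants
  have hinv1 : ∀ w y z : L, B ⁅w, y⁆ z = B w ⁅y, z⁆ := by
    intro w y z
    have h1 := hBinv y w z
    have h2 : (⁅y, w⁆ : L) = -⁅w, y⁆ := by rw [← lie_skew]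
    rw [h2, map_neg, LinearMap.neg_apply] at h1
    linarith
  have hinv2 : ∀ w y z : L, B ⁅w, y⁆ z = - B ⁅w, z⁆ y := by
    intro w y z
    have h1 := hBinv w y z
    have h2 : B y ⁅w, z⁆ = B ⁅w, z⁆ y := hBsymm _ _
    linarith
  -- key transfer lemma
  have hL1 : ∀ U V W : L, B ⁅A U, V⁆ W = B ⁅U, V⁆ (A W) := by
    intro U V W
    have h1 := hBinv (A U) V W
    have h2 := hBinv U V (A W)
    rw [hP U W] at h1
    linarith
  -- the defect
  set d : L → L → L := fun u v => A ⁅u, v⁆ - ⁅A u, v⁆ with hd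
  have hdskew : ∀ u v : L, d v u = - d u v := by
    intro u v
    simp only [hd]
    rw [← lie_skew u v, map_neg, hP v u, ← lie_skew (A u) v]
    abel
  have hrel : ∀ x y z : L, ⁅d x y, z⁆ = - ⁅x, d y z⁆ := by
    intro x y z
    simp only [hd]
    rw [sub_lie, lie_sub]
    rw [hP ⁅x, y⁆ z, lie_lie, ← hP y z, ← hP x z]
    rw [lie_lie (A x) y z, hP x ⁅y, z⁆]
    abel
  -- the 4-form
  set g : L → L → L → L → ℝ := fun u v y z => B ⁅d u v, y⁆ z with hg
  have hg1 : ∀ u v y z : L, g v u y z = - g u v y z := by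
    intro u v y z
    simp only [hg]
    rw [hdskew u v, neg_lie, map_neg, LinearMap.neg_apply]
  have hg2 : ∀ u v y z : L, g u y v z = - g u v y z := by
    intro u v y z
    simp only [hg]
    have e1 : ⁅d u v, y⁆ = - ⁅u, d v y⁆ := hrel u v y
    have e2 : ⁅d u y, v⁆ = ⁅u, d v y⁆ := by
      rw [hrel u y v, hdskew v y, lie_neg, neg_neg]
    rw [e1, e2, map_neg, LinearMap.neg_apply, neg_neg]
  have hg3 : ∀ u v y z : L, g u v z y = - g u v y z := by
    intro u v y z
    simp only [hg]
    rw [hinv2 (d u v) z y]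
  have hg4 : ∀ u v y z : L, g u v y z + g y z u v = 0 := by
    intro u v y z
    have e1 : g u v y z = B (A ⁅u, v⁆) ⁅y, z⁆ - B ⁅A u, v⁆ ⁅y, z⁆ := by
      simp only [hg, hd]
      rw [hinv1, map_sub, LinearMap.sub_apply]
    have e2 : g y z u v = B (A ⁅y, z⁆) ⁅u, v⁆ - B ⁅A y, z⁆ ⁅u, v⁆ := by
      simp only [hg, hd]
      rw [hinv1, map_sub, LinearMap.sub_apply]
    have e3 : B ⁅A u, v⁆ ⁅y, z⁆ = B (A ⁅y, z⁆) ⁅u, v⁆ := by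
      rw [hL1, hBsymm]
    have e4 : B ⁅A y, z⁆ ⁅u, v⁆ = B (A ⁅u, v⁆) ⁅y, z⁆ := by
      rw [hL1, hBsymm]
    rw [e1, e2, e3, e4]; ring
  have hg0 : ∀ u v y z : L, g u v y z = 0 := by
    intro u v y z
    have a1 := hg2 u v y z
    have a2 := hg1 u y v z
    have a3 := hg3 y u v z
    have a4 := hg2 y z u v
    have a5 := hg4 u v y z
    linarith
  -- defect vanishes
  have hd0 : ∀ u v : L, A ⁅u, v⁆ = ⁅A u, v⁆ := by
    intro u v
    have : d u v = 0 := by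
      apply center_triv
      intro y
      apply nondeg B hBpos
      intro z
      exact hg0 u v y z
    simpa only [hd, sub_eq_zero] using this
  have hcomm : ∀ x y : L, A ⁅x, y⁆ = ⁅x, A y⁆ := by
    intro x y
    rw [hd0, hP]
  -- A is symmetric w.r.t. B
  have hAs : ∀ p q : L, B (A p) q = B p (A q) := by
    intro p q
    have hp : p ∈ Submodule.span ℝ {m : L | ∃ x : L, ∃ n : L, ⁅x, n⁆ = m} := by
      rw [← perfect]
      exact Submodule.mem_top
    refine Submodule.span_induction ?_ ?_ ?_ ?_ hp
    · rintro m ⟨x, n, rfl⟩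
      rw [hd0, hL1]
    · simp
    · intro a b _ _ ha hb
      simp only [map_add, LinearMap.add_apply, ha, hb]
    · intro r a _ ha
      simp only [map_smul, LinearMap.smul_apply, ha]
  -- spectral theory
  haveI : Nontrivial L := nontriv (L := L)
  let core : InnerProductSpace.Core ℝ L :=
  { inner := fun x y => B x y
    conj_inner_symm := fun x y => by simpa using hBsymm y x
    re_inner_nonneg := fun x => by
      rcases eq_or_ne x 0 with h | h
      · simp [h]
      · exact le_of_lt (by simpa using hBpos x h)
    definite := fun x hx => by
      by_contra h
      exact (hBpos x h).ne' hx
    add_left := fun x y z => by simp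
    smul_left := fun x y r => by simp }
  letI : NormedAddCommGroup L := @InnerProductSpace.Core.toNormedAddCommGroup ℝ L _ _ _ core
  letI : InnerProductSpace ℝ L := InnerProductSpace.ofCore core.toCore
  letI : CompleteSpace L := FiniteDimensional.complete ℝ L
  have hsym : A.IsSymmetric := fun x y => hAs x y
  have hex : ∃ μ : ℝ, Module.End.HasEigenvalue (A : Module.End ℝ L) μ :=
    ⟨_, hsym.hasEigenvalue_iSup_of_finiteDimensional⟩
  obtain ⟨μ, hμ⟩ := hex
  obtain ⟨v, hv⟩ := hμ.exists_hasEigenvector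
  let E : LieIdeal ℝ L :=
  { Module.End.eigenspace (A : Module.End ℝ L) μ with
    lie_mem := by
      intro x m hm
      have hm' : A m = μ • m := Module.End.mem_eigenspace_iff.mp hm
      show ⁅x, m⁆ ∈ Module.End.eigenspace (A : Module.End ℝ L) μ
      rw [Module.End.mem_eigenspace_iff]
      show A ⁅x, m⁆ = μ • ⁅x, m⁆
      rw [hcomm, hm', lie_smul] }
  have hvE : v ∈ E := hv.1
  rcases LieAlgebra.IsSimple.eq_bot_or_eq_top E with h | h
  · exfalso
    rw [h] at hvE
    exact hv.2 ((LieSubmodule.mem_bot _).mp hvE)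
  · refine ⟨μ, fun X => ?_⟩
    have hX : X ∈ E := by
      rw [h]
      exact LieSubmodule.mem_top X
    exact Module.End.mem_eigenspace_iff.mp hX

theorem upd0 (x y z w : L) : Function.update ![x, y, z] 0 w = ![w, y, z] := by
  funext i
  fin_cases i <;> simp [Function.update]

theorem swap01 (x y z : L) : ![x, y, z] ∘ Equiv.swap (0 : Fin 3) 1 = ![y, x, z] := by
  funext i
  fin_cases i <;> simp [Equiv.swap_apply_def]


end SimpleLieSkewHolonomyAux

open SimpleLieSkewHolonomyAux in
/-- On a finite-dimensional simple real Lie algebra with an ad-invariant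
inner product `B`, every alternating trilinear form `T` such that each contraction
`T(X,·,·)` is of the form `B([V,·],·)` for some `V` is a multiple of the Cartan 3-form. -/
theorem simple_lie_skew_holonomy (L : Type) [LieRing L] [LieAlgebra ℝ L]
    [FiniteDimensional ℝ L] [LieAlgebra.IsSimple ℝ L]
    (B : L →ₗ[ℝ] L →ₗ[ℝ] ℝ)
    (hBsymm : ∀ X Y : L, B X Y = B Y X)
    (hBpos : ∀ X : L, X ≠ 0 → 0 < B X X)
    (hBinv : ∀ X Y Z : L, B ⁅X, Y⁆ Z + B Y ⁅X, Z⁆ = 0)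
    (T : L [⋀^Fin 3]→ₗ[ℝ] ℝ)
    (hT : ∀ X : L, ∃ V : L, ∀ Y Z : L, T ![X, Y, Z] = B ⁅V, Y⁆ Z) :
    ∃ c : ℝ, ∀ X Y Z : L, T ![X, Y, Z] = c * B ⁅X, Y⁆ Z := by
  classical
  choose Vf hVf using hT
  have huniq : ∀ V V' : L, (∀ Y Z : L, B ⁅V, Y⁆ Z = B ⁅V', Y⁆ Z) → V = V' := by
    intro V V' h
    have h0 : V - V' = 0 := by
      apply center_triv
      intro Y
      apply nondeg B hBpos
      intro Z
      rw [sub_lie, map_sub, LinearMap.sub_apply, h Y Z, sub_self]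
    rwa [sub_eq_zero] at h0
  let A : L →ₗ[ℝ] L :=
  { toFun := Vf
    map_add' := by
      intro X X'
      apply huniq
      intro Y Z
      rw [← hVf (X + X') Y Z]
      have e1 : (![X + X', Y, Z] : Fin 3 → L) = Function.update ![X, Y, Z] 0 (X + X') :=
        (upd0 X Y Z (X + X')).symm
      rw [e1, T.map_update_add, upd0, upd0, hVf, hVf, add_lie, map_add, LinearMap.add_apply]
    map_smul' := by
      intro r X
      apply huniq
      intro Y Z
      rw [RingHom.id_apply, ← hVf (r • X) Y Z]
      have e1 : (![r • X, Y, Z] : Fin 3 → L) = Function.update ![X, Y, Z] 0 (r • X) :=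
        (upd0 X Y Z (r • X)).symm
      rw [e1, T.map_update_smul, upd0, hVf, smul_lie, map_smul, LinearMap.smul_apply] }
  have hTA : ∀ X Y Z : L, T ![X, Y, Z] = B ⁅A X, Y⁆ Z := fun X Y Z => hVf X Y Z
  have hP : ∀ X Y : L, ⁅A X, Y⁆ = ⁅X, A Y⁆ := by
    intro X Y
    have h0 : ⁅A X, Y⁆ - ⁅X, A Y⁆ = 0 := by
      apply nondeg B hBpos
      intro Z
      have hsw : T ![Y, X, Z] = - T ![X, Y, Z] := by
        have h := T.map_swap (v := ![X, Y, Z]) (i := (0 : Fin 3)) (j := 1) (by decide)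
        rw [swap01] at h
        exact h
      rw [map_sub, LinearMap.sub_apply, ← hTA X Y Z]
      have h2 : (⁅X, A Y⁆ : L) = -⁅A Y, X⁆ := by rw [← lie_skew]
      rw [h2, map_neg, LinearMap.neg_apply, ← hTA Y X Z, hsw]
      ring
    rwa [sub_eq_zero] at h0
  obtain ⟨c, hc⟩ := scalar_of_P B hBsymm hBpos hBinv A hP
  refine ⟨c, fun X Y Z => ?_⟩
  rw [hTA X Y Z, hc X, smul_lie, map_smul, LinearMap.smul_apply, smul_eq_mul]
end

section
/- Let 𝔤 be a finite-dimensional real Lie algebra with an ad-invariant inner product ⟨·,·⟩, and suppose 𝔤 is the internal direct sum 𝔤 = 𝔷 ⊕ 𝔤₁ ⊕ … ⊕ 𝔤_q, where 𝔷 is the center of 𝔤 and each 𝔤ᵢ is a simple ideal; let πᵢ : 𝔤 → 𝔤ᵢ denote the corresponding projections. Then an alternating trilinear form T : 𝔤 × 𝔤 × 𝔤 → ℝ satisfies 'for every X ∈ 𝔤 there exists V ∈ 𝔤 with T(X,Y,Z) = ⟨[V,Y],Z⟩ for all Y,Z ∈ 𝔤' if and only if there exist real numbers α₁,…,α_q such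 that T(X,Y,Z) = Σᵢ₌₁^q αᵢ·⟨[πᵢ(X), πᵢ(Y)], πᵢ(Z)⟩ for all X,Y,Z ∈ 𝔤. -/
open Polynomial

theorem key_scalar {g : Type} [LieRing g] [LieAlgebra ℝ g] [FiniteDimensional ℝ g]
    (hsimp : LieAlgebra.IsSimple ℝ g)
    (B : g →ₗ[ℝ] g →ₗ[ℝ] ℝ)
    (hs : ∀ x y : g, B x y = B y x)
    (hp : ∀ x : g, x ≠ 0 → 0 < B x x)
    (hi : ∀ x y z : g, B ⁅x, y⁆ z + B y ⁅x, z⁆ = 0)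
    (D : g →ₗ[ℝ] g) (hD : ∀ x y : g, ⁅D x, y⁆ = ⁅x, D y⁆) :
    ∃ a : ℝ, ∀ x : g, D x = a • x := by
  classical
  have hinj : ∀ u : g, (∀ z, B u z = 0) → u = 0 := by
    intro u hu
    by_contra h
    exact absurd (hu u) (ne_of_gt (hp u h))
  have heq : ∀ u v : g, (∀ z, B u z = B v z) → u = v := by
    intro u v huv
    have h1 : ∀ z, B (u - v) z = 0 := by
      intro z; rw [map_sub, LinearMap.sub_apply, huv z, sub_self]
    have := hinj _ h1
    rwa [sub_eq_zero] at this
  -- center is trivial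
  have hcent : ∀ u : g, (∀ y : g, ⁅u, y⁆ = 0) → u = 0 := by
    intro u hu
    have hmem : u ∈ LieAlgebra.center ℝ g := by
      rw [LieAlgebra.center, LieModule.mem_maxTrivSubmodule]
      intro x
      rw [← lie_skew, hu x, neg_zero]
    rcases hsimp.eq_bot_or_eq_top (LieAlgebra.center ℝ g) with hb | ht
    · rw [hb] at hmem; exact hmem
    · exact absurd ((LieAlgebra.isLieAbelian_iff_center_eq_top ℝ g).mpr ht) hsimp.non_abelian
  -- perfect
  have hperf : ∀ u : g, u ∈ Submodule.span ℝ
      {m : g | ∃ x ∈ (⊤ : LieIdeal ℝ g), ∃ n ∈ (⊤ : LieIdeal ℝ g), ⁅x, n⁆ = m} := by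
    intro u
    have h1 : (⁅(⊤ : LieIdeal ℝ g), (⊤ : LieIdeal ℝ g)⁆ : LieIdeal ℝ g) = ⊤ := by
      rcases hsimp.eq_bot_or_eq_top ⁅(⊤ : LieIdeal ℝ g), (⊤ : LieIdeal ℝ g)⁆ with hb | ht
      · exfalso
        apply hsimp.non_abelian
        rw [LieSubmodule.lie_eq_bot_iff] at hb
        exact ⟨fun x y => hb x trivial y trivial⟩
      · exact ht
    have h2 := LieSubmodule.lieIdeal_oper_eq_linear_span'
      (R := ℝ) (L := g) (M := g) (I := ⊤) (N := ⊤)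
    rw [h1] at h2
    rw [← h2]
    simp
  -- (‡')
  have hdag : ∀ x y z : g, B ⁅D x, y⁆ z = B ⁅x, y⁆ (D z) := by
    intro x y z
    have h1 := hi (D x) y z
    have h2 := hi x y (D z)
    rw [hD x z] at h1
    linarith
  -- (B)
  have hBB : ∀ x y z : g, ⁅D ⁅x, y⁆, z⁆ = ⁅D x, ⁅y, z⁆⁆ - ⁅D y, ⁅x, z⁆⁆ := by
    intro x y z
    apply heq
    intro w
    have l1 : B ⁅D ⁅x, y⁆, z⁆ w = B ⁅⁅x, y⁆, z⁆ (D w) := hdag _ _ _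
    have l2 : B ⁅D x, ⁅y, z⁆⁆ w = B ⁅x, ⁅y, z⁆⁆ (D w) := hdag _ _ _
    have l3 : B ⁅D y, ⁅x, z⁆⁆ w = B ⁅y, ⁅x, z⁆⁆ (D w) := hdag _ _ _
    have jac : ⁅⁅x, y⁆, z⁆ = ⁅x, ⁅y, z⁆⁆ - ⁅y, ⁅x, z⁆⁆ := lie_lie x y z
    rw [map_sub, LinearMap.sub_apply, l1, l2, l3, jac, map_sub, LinearMap.sub_apply]
  -- centroid
  have hC : ∀ x y : g, D ⁅x, y⁆ = ⁅D x, y⁆ := by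
    intro x y
    have hz : ∀ z : g, ⁅D ⁅x, y⁆ - ⁅D x, y⁆, z⁆ = 0 := by
      intro z
      have e1 : ⁅D ⁅x, y⁆, z⁆ - ⁅⁅D x, y⁆, z⁆ = ⁅y, ⁅D x, z⁆⁆ - ⁅D y, ⁅x, z⁆⁆ := by
        rw [hBB x y z, lie_lie (D x) y z]
        abel
      have e2 : ⁅D ⁅x, y⁆, z⁆ - ⁅⁅D x, y⁆, z⁆ = ⁅D y, ⁅x, z⁆⁆ - ⁅y, ⁅D x, z⁆⁆ := by
        have a1 : ⁅D ⁅x, y⁆, z⁆ = ⁅x, ⁅D y, z⁆⁆ - ⁅y, ⁅D x, z⁆⁆ := by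
          rw [hD ⁅x, y⁆ z, lie_lie x y (D z), ← hD y z, ← hD x z]
        have a2 : ⁅⁅D x, y⁆, z⁆ = ⁅x, ⁅D y, z⁆⁆ - ⁅D y, ⁅x, z⁆⁆ := by
          rw [hD x y, lie_lie x (D y) z]
        rw [a1, a2]
        abel
      have h6 := e1.symm.trans e2
      have h7 : (2 : ℝ) • (⁅y, ⁅D x, z⁆⁆ - ⁅D y, ⁅x, z⁆⁆) = 0 := by
        rw [two_smul]
        nth_rewrite 2 [h6]
        abel
      rcases smul_eq_zero.mp h7 with h | h
      · norm_num at h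
      · rw [sub_lie, e1, h]
    have := hcent _ hz
    rwa [sub_eq_zero] at this
  -- D is symmetric
  have hsym : ∀ u w : g, B (D u) w = B u (D w) := by
    intro u w
    have hu := hperf u
    induction hu using Submodule.span_induction with
    | mem m hm =>
        obtain ⟨x, -, n, -, rfl⟩ := hm
        rw [hC x n, hdag]
    | zero => simp
    | add a b _ _ ha hb => simp [map_add, LinearMap.add_apply, ha, hb]
    | smul c a _ ha => simp [map_smul, LinearMap.smul_apply, ha]
  -- minimal polynomial argument
  have hint : IsIntegral ℝ D := LinearMap.isIntegral D
  have hnontriv : Nontrivial g := by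
    by_contra h
    rw [not_nontrivial_iff_subsingleton] at h
    exact hsimp.non_abelian ⟨fun x y => Subsingleton.elim _ _⟩
  have hp0ne : minpoly ℝ D ≠ 0 := minpoly.ne_zero hint
  have hp0nu : ¬IsUnit (minpoly ℝ D) := minpoly.not_isUnit ℝ D
  obtain ⟨p, hpirr, hpdvd⟩ := WfDvdMonoid.exists_irreducible_factor hp0nu hp0ne
  have hpne : p ≠ 0 := hpirr.ne_zero
  have hcne : p.leadingCoeff ≠ 0 := leadingCoeff_ne_zero.mpr hpne
  set q : ℝ[X] := p * C p.leadingCoeff⁻¹ with hqdef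
  have hqm : q.Monic := monic_mul_leadingCoeff_inv hpne
  have hassoc : Associated p q := associated_mul_unit_right p _
    (Polynomial.isUnit_C.mpr (isUnit_iff_ne_zero.mpr (inv_ne_zero hcne)))
  have hqirr : Irreducible q := hassoc.irreducible hpirr
  have hqdvd : q ∣ minpoly ℝ D := hassoc.symm.dvd.trans hpdvd
  have hqne : q ≠ 0 := hqm.ne_zero
  -- kernel of aeval D q is nonzero
  have hker : LinearMap.ker (aeval D q) ≠ ⊥ := by
    intro hk
    have hinj' : Function.Injective (aeval D q) := LinearMap.ker_eq_bot.mp hk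
    obtain ⟨r, hr⟩ := hqdvd
    have h0 : aeval D (minpoly ℝ D) = 0 := minpoly.aeval ℝ D
    have hmul : (aeval D q) * (aeval D r) = 0 := by rw [← map_mul, ← hr, h0]
    have hr0 : aeval D r = 0 := by
      ext v
      have : (aeval D q) ((aeval D r) v) = 0 := by
        rw [← Module.End.mul_apply, hmul]; rfl
      have := hinj' (by rw [this, map_zero] : (aeval D q) ((aeval D r) v) = (aeval D q) 0)
      simpa using this
    have hdvd2 : minpoly ℝ D ∣ r := minpoly.dvd ℝ D hr0
    have hrne : r ≠ 0 := by
      rintro rfl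
      rw [mul_zero] at hr
      exact hp0ne hr
    have h3 : (minpoly ℝ D).natDegree ≤ r.natDegree := natDegree_le_of_dvd hdvd2 hrne
    have h4 : (minpoly ℝ D).natDegree = q.natDegree + r.natDegree := by
      rw [hr, natDegree_mul hqne hrne]
    have h5 : 0 < q.natDegree := natDegree_pos_iff_degree_pos.mpr (degree_pos_of_irreducible hqirr)
    omega
  obtain ⟨x0, hx0mem, hx0ne⟩ := (Submodule.ne_bot_iff _).mp hker
  have hx0 : (aeval D q) x0 = 0 := LinearMap.mem_ker.mp hx0mem
  have hd2 : q.natDegree ≤ 2 := by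
    have := hqirr.degree_le_two
    exact natDegree_le_iff_degree_le.mpr this
  have hd1 : 0 < q.natDegree := natDegree_pos_iff_degree_pos.mpr (degree_pos_of_irreducible hqirr)
  have hcase : q.natDegree = 1 ∨ q.natDegree = 2 := by omega
  rcases hcase with hq1 | hq2
  · -- degree one: real eigenvalue
    have hqx : q = X + C (q.coeff 0) := hqm.eq_X_add_C hq1
    have heig : D x0 = (-(q.coeff 0)) • x0 := by
      rw [hqx, map_add, aeval_X, aeval_C, LinearMap.add_apply,
        Module.algebraMap_end_apply] at hx0
      rw [neg_smul, eq_comm, neg_eq_iff_add_eq_zero, add_comm]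
      exact hx0
    set a : ℝ := -(q.coeff 0) with ha
    refine ⟨a, ?_⟩
    set K : LieIdeal ℝ g :=
      { toSubmodule := LinearMap.ker (D - a • (LinearMap.id : g →ₗ[ℝ] g))
        lie_mem := by
          intro x m hm
          simp only [Submodule.mem_carrier, SetLike.mem_coe, LinearMap.mem_ker,
            LinearMap.sub_apply, LinearMap.smul_apply, LinearMap.id_apply,
            sub_eq_zero] at hm ⊢
          rw [hC x m, hD x m, hm, lie_smul] } with hK
    have hmemK : ∀ v : g, v ∈ K ↔ D v = a • v := by
      intro v
      rw [hK, LieSubmodule.mem_mk_iff', LinearMap.mem_ker, LinearMap.sub_apply,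
        LinearMap.smul_apply, LinearMap.id_apply, sub_eq_zero]
    have hKne : K ≠ ⊥ := by
      intro hKb
      rw [LieSubmodule.eq_bot_iff] at hKb
      exact hx0ne (hKb x0 ((hmemK x0).mpr heig))
    rcases hsimp.eq_bot_or_eq_top K with hb | ht
    · exact absurd hb hKne
    · intro v
      have : v ∈ K := by rw [ht]; exact LieSubmodule.mem_top v
      exact (hmemK v).mp this
  · -- degree two: contradiction with positivity
    exfalso
    have hcoeff2 : q.coeff 2 = 1 := by
      have := hqm.coeff_natDegree
      rwa [hq2] at this
    have h5 : (q - X ^ 2).degree ≤ 1 := by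
      rw [degree_le_iff_coeff_zero]
      intro m hm
      have hm2 : 2 ≤ m := by
        by_contra hcon
        push_neg at hcon
        interval_cases m
        · norm_num at hm
        · norm_num at hm
      rw [coeff_sub, coeff_X_pow]
      rcases eq_or_lt_of_le hm2 with h | h
      · rw [← h, hcoeff2]; simp
      · rw [coeff_eq_zero_of_natDegree_lt (by omega), if_neg (by omega)]
        simp
    have h6 := eq_X_add_C_of_degree_le_one h5
    have hc1 : (q - X ^ 2).coeff 1 = q.coeff 1 := by
      rw [coeff_sub, coeff_X_pow]; norm_num
    have hc0 : (q - X ^ 2).coeff 0 = q.coeff 0 := by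
      rw [coeff_sub, coeff_X_pow]; norm_num
    rw [hc1, hc0] at h6
    have hqx : q = X ^ 2 + C (q.coeff 1) * X + C (q.coeff 0) := by
      rw [sub_eq_iff_eq_add] at h6
      conv_lhs => rw [h6]
      ring
    set aa : ℝ := q.coeff 1 with haa
    set bb : ℝ := q.coeff 0 with hbb
    have haveq : D (D x0) + aa • D x0 + bb • x0 = 0 := by
      rw [hqx] at hx0
      simpa [pow_two, Module.End.mul_apply, Module.algebraMap_end_apply] using hx0
    have e0 : B (D (D x0)) x0 + aa * B (D x0) x0 + bb * B x0 x0 = 0 := by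
      have h := congrArg (fun v => B v x0) haveq
      simpa [map_add, map_smul, LinearMap.add_apply, LinearMap.smul_apply,
        smul_eq_mul] using h
    have h7 : B (D (D x0)) x0 = B (D x0) (D x0) := hsym (D x0) x0
    have hcross : B x0 (D x0) = B (D x0) x0 := hs _ _
    have hyy : B (D x0 + (aa/2) • x0) (D x0 + (aa/2) • x0) = (aa^2/4 - bb) * B x0 x0 := by
      simp only [map_add, map_smul, LinearMap.add_apply, LinearMap.smul_apply, smul_eq_mul]
      linear_combination e0 - h7 + (aa/2) * hcross
    have hge : 0 ≤ B (D x0 + (aa/2) • x0) (D x0 + (aa/2) • x0) := by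
      by_cases hy0 : D x0 + (aa/2) • x0 = 0
      · rw [hy0]; simp
      · exact (hp _ hy0).le
    have hpos : 0 < B x0 x0 := hp x0 hx0ne
    have hnn : 0 ≤ aa^2/4 - bb := by nlinarith [hge, hpos, hyy]
    set s : ℝ := Real.sqrt (aa^2/4 - bb) with hsdef
    have hs2 : s^2 = aa^2/4 - bb := Real.sq_sqrt hnn
    set t : ℝ := -aa/2 + s with htdef
    have hroot : q.IsRoot t := by
      rw [IsRoot.def, hqx]
      simp only [eval_add, eval_mul, eval_pow, eval_X, eval_C]
      linear_combination hs2
    obtain ⟨u, hu⟩ := dvd_iff_isRoot.mpr hroot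
    rcases hqirr.isUnit_or_isUnit hu with h1 | h2
    · exact not_isUnit_X_sub_C t h1
    · have hu0 : u ≠ 0 := by
        rintro rfl
        rw [mul_zero] at hu
        exact hqne hu
      have hud : u.natDegree = 0 := natDegree_eq_zero_of_isUnit h2
      have hq1' : q.natDegree = 1 := by
        rw [hu, natDegree_mul (X_sub_C_ne_zero t) hu0, natDegree_X_sub_C, hud]
      omega


/-- Let `𝔤 = 𝔷 ⊕ 𝔤₁ ⊕ … ⊕ 𝔤_q` be a finite-dimensional real Lie algebra
with ad-invariant inner product `B`, where `𝔷` is the center and the `𝔤ᵢ` are simple ideals,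
with projections `π i`.  An alternating trilinear form `T` has all its contractions of the
form `B([V,·],·)` iff it is a linear combination of the Cartan 3-forms of the simple ideals. -/
theorem compact_lie_characteristic_torsion (L : Type) [LieRing L] [LieAlgebra ℝ L]
    [FiniteDimensional ℝ L]
    (B : L →ₗ[ℝ] L →ₗ[ℝ] ℝ)
    (hBsymm : ∀ X Y : L, B X Y = B Y X)
    (hBpos : ∀ X : L, X ≠ 0 → 0 < B X X)
    (hBinv : ∀ X Y Z : L, B ⁅X, Y⁆ Z + B Y ⁅X, Z⁆ = 0)
    (q : ℕ) (I : Fin q → LieIdeal ℝ L)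
    (hsimple : ∀ i, LieAlgebra.IsSimple ℝ (I i))
    (hdecomp : DirectSum.IsInternal fun o : Option (Fin q) =>
      o.elim (LieAlgebra.center ℝ L).toSubmodule fun i => (I i).toSubmodule)
    (π : Fin q → (L →ₗ[ℝ] L))
    (hπmem : ∀ (i : Fin q) (X : L), π i X ∈ I i)
    (hπid : ∀ i : Fin q, ∀ X ∈ I i, π i X = X)
    (hπcenter : ∀ i : Fin q, ∀ X ∈ LieAlgebra.center ℝ L, π i X = 0)
    (hπoff : ∀ i j : Fin q, i ≠ j → ∀ X ∈ I j, π i X = 0)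
    (T : L [⋀^Fin 3]→ₗ[ℝ] ℝ) :
    (∀ X : L, ∃ V : L, ∀ Y Z : L, T ![X, Y, Z] = B ⁅V, Y⁆ Z) ↔
      ∃ α : Fin q → ℝ, ∀ X Y Z : L,
        T ![X, Y, Z] = ∑ i, α i * B ⁅π i X, π i Y⁆ (π i Z) := by
  classical
  -- ## generic helpers
  have hBeq : ∀ u v : L, (∀ z, B u z = B v z) → u = v := by
    intro u v huv
    have h1 : ∀ z, B (u - v) z = 0 := by
      intro z; rw [map_sub, LinearMap.sub_apply, huv z, sub_self]
    by_contra hne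
    have h2 : u - v ≠ 0 := sub_ne_zero.mpr hne
    exact absurd (h1 (u - v)) (ne_of_gt (hBpos _ h2))
  have hcen1 : ∀ c ∈ LieAlgebra.center ℝ L, ∀ Y : L, ⁅Y, c⁆ = 0 := by
    intro c hc Y
    exact (LieModule.mem_maxTrivSubmodule ℝ L L c).mp hc Y
  have hcen2 : ∀ c ∈ LieAlgebra.center ℝ L, ∀ Y : L, ⁅c, Y⁆ = 0 := by
    intro c hc Y
    rw [← lie_skew, hcen1 c hc Y, neg_zero]
  have interIJ : ∀ i j : Fin q, i ≠ j → ∀ u : L, u ∈ I i → u ∈ I j → u = 0 := by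
    intro i j hij u hui huj
    have h1 := hπid i u hui
    have h2 := hπoff i j hij u huj
    rw [h2] at h1; exact h1.symm
  have hmemlie : ∀ i : Fin q, ∀ a ∈ I i, ∀ y : L, ⁅a, y⁆ ∈ I i := by
    intro i a ha y
    rw [← lie_skew]
    exact neg_mem ((I i).lie_mem ha)
  have lie_sum' : ∀ (x : L) (s : Finset (Fin q)) (g : Fin q → L),
      ⁅x, ∑ j ∈ s, g j⁆ = ∑ j ∈ s, ⁅x, g j⁆ := by
    intro x s g
    induction s using Finset.cons_induction with
    | empty => simp
    | cons a s ha ih => rw [Finset.sum_cons, Finset.sum_cons, lie_add, ih]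
  have sum_lie' : ∀ (s : Finset (Fin q)) (g : Fin q → L) (y : L),
      ⁅∑ j ∈ s, g j, y⁆ = ∑ j ∈ s, ⁅g j, y⁆ := by
    intro s g y
    induction s using Finset.cons_induction with
    | empty => simp
    | cons a s ha ih => rw [Finset.sum_cons, Finset.sum_cons, add_lie, ih]
  -- ## decomposition
  have hc : ∀ Y : L, Y - ∑ j, π j Y ∈ LieAlgebra.center ℝ L := by
    intro Y
    have hY : Y ∈ iSup (fun o : Option (Fin q) =>
        o.elim (LieAlgebra.center ℝ L).toSubmodule fun i => (I i).toSubmodule) := by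
      rw [hdecomp.submodule_iSup_eq_top]; trivial
    refine Submodule.iSup_induction
      (motive := fun y => y - ∑ j, π j y ∈ LieAlgebra.center ℝ L) _ hY ?_ ?_ ?_
    · rintro (_ | i) x hx
      · have hx' : x ∈ LieAlgebra.center ℝ L := hx
        have hz : ∀ j, π j x = 0 := fun j => hπcenter j x hx'
        have : ∑ j, π j x = 0 := by simp [hz]
        rw [this, sub_zero]; exact hx'
      · have hx' : x ∈ I i := hx
        have hsum : ∑ j, π j x = x := by
          rw [Finset.sum_eq_single i]
          · exact hπid i x hx'
          · intro j _ hji; exact hπoff j i hji x hx'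
          · intro hni; exact absurd (Finset.mem_univ i) hni
        rw [hsum, sub_self]; exact zero_mem _
    · simp
    · intro a b ha hb
      have heq2 : a + b - ∑ j, π j (a + b) = (a - ∑ j, π j a) + (b - ∑ j, π j b) := by
        simp only [map_add, Finset.sum_add_distrib]; abel
      rw [heq2]; exact add_mem ha hb
  have key3 : ∀ i : Fin q, ∀ a ∈ I i, ∀ Y : L, ⁅a, Y⁆ = ⁅a, π i Y⁆ := by
    intro i a ha Y
    have h1 : ⁅a, Y⁆ = ⁅a, Y - ∑ j, π j Y⁆ + ⁅a, ∑ j, π j Y⁆ := by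
      rw [← lie_add, sub_add_cancel]
    rw [h1, hcen1 _ (hc Y) a, zero_add, lie_sum']
    rw [Finset.sum_eq_single i]
    · intro j _ hji
      exact interIJ i j hji.symm _ (hmemlie i a ha _) ((I j).lie_mem (hπmem j Y))
    · intro hni; exact absurd (Finset.mem_univ i) hni
  have key4 : ∀ i : Fin q, ∀ a ∈ I i, ∀ (b Z : L), B ⁅a, b⁆ Z = B ⁅a, b⁆ (π i Z) := by
    intro i a ha b Z
    have h1 := hBinv a b Z
    have h2 := hBinv a b (π i Z)
    rw [key3 i a ha Z] at h1
    linarith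
  have central0 : ∀ i : Fin q, ∀ u ∈ I i, (∀ y ∈ I i, ⁅u, y⁆ = 0) → u = 0 := by
    intro i u hu h0
    have hcen : u ∈ LieAlgebra.center ℝ L := by
      rw [LieAlgebra.center, LieModule.mem_maxTrivSubmodule]
      intro x
      rw [← lie_skew, key3 i u hu x, h0 _ (hπmem i x), neg_zero]
    have h1 := hπcenter i u hcen
    have h2 := hπid i u hu
    rw [h1] at h2; exact h2.symm
  -- ## multilinearity helpers for T
  have hupd0 : ∀ (X X' Y Z : L), Function.update (![X, Y, Z] : Fin 3 → L) 0 X' = ![X', Y, Z] := by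
    intro X X' Y Z
    funext k
    fin_cases k <;> simp [Function.update]
  have Tadd0 : ∀ X X' Y Z : L, T ![X + X', Y, Z] = T ![X, Y, Z] + T ![X', Y, Z] := by
    intro X X' Y Z
    have h := T.toMultilinearMap.map_update_add ![X, Y, Z] 0 X X'
    rwa [hupd0, hupd0, hupd0] at h
  have Tsmul0 : ∀ (c : ℝ) (X Y Z : L), T ![c • X, Y, Z] = c * T ![X, Y, Z] := by
    intro c X Y Z
    have h := T.toMultilinearMap.map_update_smul ![X, Y, Z] 0 c X
    rwa [hupd0, hupd0, smul_eq_mul] at h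
  have Tswap : ∀ X Y Z : L, T ![Y, X, Z] = -T ![X, Y, Z] := by
    intro X Y Z
    have hv : (![X, Y, Z] : Fin 3 → L) ∘ Equiv.swap (0 : Fin 3) 1 = ![Y, X, Z] := by
      funext k
      fin_cases k <;> simp [Equiv.swap_apply_def, Fin.ext_iff]
    have h := T.map_swap ![X, Y, Z] (show (0 : Fin 3) ≠ 1 by decide)
    rwa [hv] at h
  constructor
  · -- forward direction
    intro h
    set f : Fin q → L → L := fun i X => π i (Classical.choose (h X)) with hfdef
    have hch : ∀ X Y Z : L, T ![X, Y, Z] = B ⁅Classical.choose (h X), Y⁆ Z :=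
      fun X => Classical.choose_spec (h X)
    have hfmem : ∀ (i : Fin q) (X : L), f i X ∈ I i := fun i X => hπmem i _
    have hT : ∀ X Y Z : L, T ![X, Y, Z] = ∑ i, B ⁅f i X, π i Y⁆ (π i Z) := by
      intro X Y Z
      rw [hch X Y Z]
      set V := Classical.choose (h X) with hV
      have h1 : ⁅V, Y⁆ = ∑ i, ⁅π i V, π i Y⁆ := by
        have e1 : ⁅V, Y⁆ = ⁅V - ∑ j, π j V, Y⁆ + ⁅∑ j, π j V, Y⁆ := by
          rw [← add_lie, sub_add_cancel]
        rw [e1, hcen2 _ (hc V) Y, zero_add, sum_lie']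
        exact Finset.sum_congr rfl fun i _ => key3 i _ (hπmem i V) Y
      rw [h1, map_sum, LinearMap.coe_sum, Finset.sum_apply]
      exact Finset.sum_congr rfl fun i _ => key4 i _ (hπmem i V) _ Z
    have hfP : ∀ (i : Fin q) (X : L), ∀ y ∈ I i, ∀ Z : L,
        T ![X, y, Z] = B ⁅f i X, y⁆ Z := by
      intro i X y hy Z
      rw [hT X y Z, Finset.sum_eq_single i]
      · rw [hπid i y hy]
        exact (key4 i _ (hfmem i X) y Z).symm
      · intro j _ hji
        rw [hπoff j i hji y hy]
        simp
      · intro hni; exact absurd (Finset.mem_univ i) hni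
    have hUniq : ∀ (i : Fin q) (X W : L), W ∈ I i →
        (∀ y ∈ I i, ∀ Z : L, T ![X, y, Z] = B ⁅W, y⁆ Z) → W = f i X := by
      intro i X W hW hprop
      have h0 : ∀ y ∈ I i, ⁅W - f i X, y⁆ = 0 := by
        intro y hy
        have e1 : ⁅W, y⁆ = ⁅f i X, y⁆ :=
          hBeq _ _ fun Z => ((hprop y hy Z).symm.trans (hfP i X y hy Z))
        rw [sub_lie, e1, sub_self]
      have hmem : W - f i X ∈ I i := sub_mem hW (hfmem i X)
      have := central0 i _ hmem h0
      rwa [sub_eq_zero] at this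
    have fadd : ∀ (i : Fin q) (X X' : L), f i (X + X') = f i X + f i X' := by
      intro i X X'
      refine (hUniq i (X + X') _ (add_mem (hfmem i X) (hfmem i X')) ?_).symm
      intro y hy Z
      rw [Tadd0, hfP i X y hy Z, hfP i X' y hy Z, add_lie, map_add, LinearMap.add_apply]
    have fsmul : ∀ (i : Fin q) (c : ℝ) (X : L), f i (c • X) = c • f i X := by
      intro i c X
      refine (hUniq i (c • X) _ (SMulMemClass.smul_mem c (hfmem i X)) ?_).symm
      intro y hy Z
      rw [Tsmul0, hfP i X y hy Z, smul_lie, map_smul, LinearMap.smul_apply, smul_eq_mul]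
    have fstar : ∀ i : Fin q, ∀ x ∈ I i, ∀ y ∈ I i, ⁅f i x, y⁆ = ⁅x, f i y⁆ := by
      intro i x hx y hy
      have e : ⁅f i x, y⁆ = -⁅f i y, x⁆ := by
        apply hBeq
        intro Z
        calc B ⁅f i x, y⁆ Z = T ![x, y, Z] := (hfP i x y hy Z).symm
          _ = -T ![y, x, Z] := Tswap y x Z
          _ = -(B ⁅f i y, x⁆ Z) := by rw [hfP i y x hx Z]
          _ = B (-⁅f i y, x⁆) Z := by rw [map_neg, LinearMap.neg_apply]
      rw [e, lie_skew]
    have fcross : ∀ i j : Fin q, i ≠ j → ∀ x ∈ I j, f i x = 0 := by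
      intro i j hij x hx
      refine central0 i (f i x) (hfmem i x) ?_
      intro y hy
      have e : ⁅f i x, y⁆ = -⁅f j y, x⁆ := by
        apply hBeq
        intro Z
        calc B ⁅f i x, y⁆ Z = T ![x, y, Z] := (hfP i x y hy Z).symm
          _ = -T ![y, x, Z] := Tswap y x Z
          _ = -(B ⁅f j y, x⁆ Z) := by rw [hfP j y x hx Z]
          _ = B (-⁅f j y, x⁆) Z := by rw [map_neg, LinearMap.neg_apply]
      have hmem1 : ⁅f i x, y⁆ ∈ I i := hmemlie i _ (hfmem i x) y
      have hmem2 : (-⁅f j y, x⁆) ∈ I j := neg_mem (hmemlie j _ (hfmem j y) x)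
      refine interIJ i j hij _ hmem1 ?_
      rw [e]; exact hmem2
    -- scalars on each ideal
    have hscal : ∀ i : Fin q, ∃ a : ℝ, ∀ x ∈ I i, f i x = a • x := by
      intro i
      haveI := hsimple i
      set Dm : (I i) →ₗ[ℝ] (I i) :=
        { toFun := fun x => ⟨f i ↑x, hfmem i ↑x⟩
          map_add' := by
            intro a b
            apply Subtype.ext
            simp [fadd]
          map_smul' := by
            intro c a
            apply Subtype.ext
            simp [fsmul] } with hDm
      set B' : (I i) →ₗ[ℝ] (I i) →ₗ[ℝ] ℝ :=
        LinearMap.mk₂ ℝ (fun x y => B ↑x ↑y)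
          (fun m n o => by simp)
          (fun c m n => by simp)
          (fun m n o => by simp)
          (fun c m n => by simp) with hB'
    -- apply key lemma
      have hD' : ∀ x y : (I i), ⁅Dm x, y⁆ = ⁅x, Dm y⁆ := by
        intro x y
        apply Subtype.ext
        show ⁅((Dm x : (I i)) : L), (y : L)⁆ = ⁅(x : L), ((Dm y : (I i)) : L)⁆
        exact fstar i ↑x x.2 ↑y y.2
      obtain ⟨a, ha⟩ := key_scalar (hsimple i) B'
        (fun x y => hBsymm ↑x ↑y)
        (fun x hx => hBpos ↑x (fun hh => hx (Subtype.ext hh)))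
        (fun x y z => by
          have h9 := hBinv (↑x : L) ↑y ↑z
          exact h9)
        Dm hD'
      refine ⟨a, fun x hx => ?_⟩
      have := congrArg (Subtype.val) (ha ⟨x, hx⟩)
      simpa [hDm] using this
    choose α hα using hscal
    have ffinal : ∀ (i : Fin q) (X : L), f i X = α i • π i X := by
      intro i X
      have h0 : ∀ y ∈ I i, ⁅f i X - α i • π i X, y⁆ = 0 := by
        intro y hy
        have e : ⁅f i X, y⁆ = α i • ⁅π i X, y⁆ := by
          apply hBeq
          intro Z
          calc B ⁅f i X, y⁆ Z = T ![X, y, Z] := (hfP i X y hy Z).symm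
            _ = -T ![y, X, Z] := Tswap y X Z
            _ = -(∑ k, B ⁅f k y, π k X⁆ (π k Z)) := by rw [hT y X Z]
            _ = -(B ⁅f i y, π i X⁆ (π i Z)) := by
                congr 1
                rw [Finset.sum_eq_single i]
                · intro j _ hji
                  rw [fcross j i hji y hy]
                  simp
                · intro hni; exact absurd (Finset.mem_univ i) hni
            _ = -(B ⁅α i • y, π i X⁆ (π i Z)) := by rw [hα i y hy]
            _ = α i * B ⁅π i X, y⁆ (π i Z) := by
                rw [smul_lie, map_smul, LinearMap.smul_apply, smul_eq_mul,
                  ← lie_skew y (π i X), map_neg, LinearMap.neg_apply]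
                ring
            _ = α i * B ⁅π i X, y⁆ Z := by rw [← key4 i _ (hπmem i X) y Z]
            _ = B (α i • ⁅π i X, y⁆) Z := by
                rw [map_smul, LinearMap.smul_apply, smul_eq_mul]
        rw [sub_lie, e, smul_lie, sub_self]
      have hmem : f i X - α i • π i X ∈ I i :=
        sub_mem (hfmem i X) (SMulMemClass.smul_mem _ (hπmem i X))
      have := central0 i _ hmem h0
      rwa [sub_eq_zero] at this
    refine ⟨α, fun X Y Z => ?_⟩
    rw [hT X Y Z]
    refine Finset.sum_congr rfl fun i _ => ?_
    rw [ffinal i X, smul_lie, map_smul, LinearMap.smul_apply, smul_eq_mul]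
  · -- backward direction
    rintro ⟨α, hα⟩ X
    refine ⟨∑ i, α i • π i X, fun Y Z => ?_⟩
    rw [hα X Y Z]
    have h1 : ⁅∑ i, α i • π i X, Y⁆ = ∑ i, α i • ⁅π i X, π i Y⁆ := by
      rw [sum_lie']
      exact Finset.sum_congr rfl fun i _ => by
        rw [smul_lie, key3 i _ (hπmem i X) Y]
    rw [h1, map_sum, LinearMap.coe_sum, Finset.sum_apply]
    refine Finset.sum_congr rfl fun i _ => ?_
    rw [map_smul, LinearMap.smul_apply, smul_eq_mul, key4 i _ (hπmem i X) _ Z]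
end

section
/- Let n ≥ 3 and α ∈ ℝ with α ≠ 0, define η(X,Y) := iα·(XY + YX − (2/n)·tr(XY)·Iₙ) for X,Y ∈ 𝔰𝔲(n), and define the ad-invariant inner product g(X,Y) := −2n·Re(tr(XY)) on 𝔰𝔲(n). Then there exist X, Y, Z ∈ 𝔰𝔲(n) with g(η(X,Y), Z) + g(Y, η(X,Z)) ≠ 0; that is, the bilinear map η does not define a metric connection with respect to the biinvariant metric on SU(n). -/
open Matrix

/-- The special unitary Lie algebra `𝔰𝔲(n)`: traceless anti-hermitian matrices. -/
def suSet (n : ℕ) : Set (Matrix (Fin n) (Fin n) ℂ) :=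
  {X | Xᴴ = -X ∧ X.trace = 0}

/-- Laquer's symmetric map `η(X,Y) = iα(XY + YX - (2/n) tr(XY)·1)` on `𝔰𝔲(n)`. -/
noncomputable def etaMap (n : ℕ) (α : ℝ) (X Y : Matrix (Fin n) (Fin n) ℂ) :
    Matrix (Fin n) (Fin n) ℂ :=
  (Complex.I * (α : ℂ)) • (X * Y + Y * X - ((2 / (n : ℂ)) * (X * Y).trace) • (1 : Matrix (Fin n) (Fin n) ℂ))

/-- The biinvariant metric `g(X,Y) = -2n·Re(tr(XY))` on `𝔰𝔲(n)`. -/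
noncomputable def gMetric (n : ℕ) (X Y : Matrix (Fin n) (Fin n) ℂ) : ℝ :=
  -2 * (n : ℝ) * ((X * Y).trace).re

lemma sum_fin_aux (n : ℕ) (hn : 3 ≤ n) (f : ℕ → ℂ) (hf : ∀ k, 3 ≤ k → f k = 0) :
    ∑ j : Fin n, f j.val = f 0 + f 1 + f 2 := by
  rw [Fin.sum_univ_eq_sum_range]
  rw [← Finset.sum_subset (Finset.range_subset_range.2 hn)]
  · simp [Finset.sum_range_succ]
  · intro k _ hk3
    exact hf k (by simpa using hk3)

/-- For `n ≥ 3` and `α ≠ 0`, the biinvariant connection defined by `η`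
is not metric: the total skew-symmetry fails for some `X, Y, Z ∈ 𝔰𝔲(n)`. -/
theorem eta_not_metric (n : ℕ) (hn : 3 ≤ n) (α : ℝ) (hα : α ≠ 0) :
    ∃ X Y Z : Matrix (Fin n) (Fin n) ℂ, X ∈ suSet n ∧ Y ∈ suSet n ∧ Z ∈ suSet n ∧
      gMetric n (etaMap n α X Y) Z + gMetric n Y (etaMap n α X Z) ≠ 0 := by
  classical
  set c : ℕ → ℂ := fun k => if k = 0 then 1 else if k = 1 then 1 else if k = 2 then -2 else 0
    with hc
  have hcr : ∀ k, (starRingEnd ℂ) (c k) = c k := by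
    intro k
    simp only [hc]
    split_ifs <;> simp [Complex.ext_iff]
  set X : Matrix (Fin n) (Fin n) ℂ :=
    Matrix.diagonal (fun j : Fin n => Complex.I * c j.val) with hX
  have hmem : X ∈ suSet n := by
    constructor
    · rw [hX, Matrix.diagonal_conjTranspose, Matrix.diagonal_neg]
      have : (star fun j : Fin n => Complex.I * c j.val)
          = fun i : Fin n => -(Complex.I * c i.val) := by
        funext j
        rw [Pi.star_apply, star_mul', Complex.star_def, Complex.conj_I, hcr]
        ring
      rw [this]
    · rw [hX, Matrix.trace_diagonal, ← Finset.mul_sum]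
      have : ∑ j : Fin n, c j.val = 0 := by
        rw [sum_fin_aux n hn c (by
        intro k hk
        have h0 : k ≠ 0 := by omega
        have h1 : k ≠ 1 := by omega
        have h2 : k ≠ 2 := by omega
        simp [hc, h0, h1, h2])]
        norm_num [hc]
      rw [this, mul_zero]
  -- traces
  have hX0 : X.trace = 0 := hmem.2
  have hXX : (X * X).trace = -6 := by
    rw [hX, Matrix.diagonal_mul_diagonal, Matrix.trace_diagonal]
    have := sum_fin_aux n hn (fun k => Complex.I * c k * (Complex.I * c k))
      (by
        intro k hk
        have h0 : k ≠ 0 := by omega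
        have h1 : k ≠ 1 := by omega
        have h2 : k ≠ 2 := by omega
        simp [hc, h0, h1, h2])
    try simp only at this
    rw [this]
    simp only [hc]
    norm_num
    linear_combination (4 : ℂ) * Complex.I_sq
  have hXXX : (X * X * X).trace = 6 * Complex.I := by
    rw [hX, Matrix.diagonal_mul_diagonal, Matrix.diagonal_mul_diagonal, Matrix.trace_diagonal]
    have := sum_fin_aux n hn (fun k => Complex.I * c k * (Complex.I * c k) * (Complex.I * c k))
      (by
        intro k hk
        have h0 : k ≠ 0 := by omega
        have h1 : k ≠ 1 := by omega
        have h2 : k ≠ 2 := by omega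
        simp [hc, h0, h1, h2])
    try simp only at this
    rw [this]
    simp only [hc]
    norm_num
    linear_combination (-8 : ℂ) * Complex.I * Complex.I_sq
  refine ⟨X, X, X, hmem, hmem, hmem, ?_⟩
  have htr : (etaMap n α X X * X).trace = -12 * α := by
    rw [etaMap, Matrix.smul_mul, Matrix.trace_smul, sub_mul, add_mul,
      Matrix.smul_mul, Matrix.one_mul, Matrix.trace_sub, Matrix.trace_add,
      Matrix.trace_smul, hX0, hXXX]
    simp only [smul_eq_mul, mul_zero, sub_zero]
    linear_combination (12 : ℂ) * (α : ℂ) * Complex.I_sq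
  have htr2 : (X * etaMap n α X X).trace = -12 * α := by
    rw [← htr, Matrix.trace_mul_comm]
  rw [gMetric, gMetric, htr, htr2]
  have : ((-12 : ℂ) * α).re = -12 * α := by
    simp [Complex.ofReal_mul]
  rw [this]
  have hn0 : (0 : ℝ) < n := by positivity
  intro h
  apply hα
  nlinarith [h]
end

section
/- Let n ≥ 2 and define ν(X,Y) := i·(X·tr(Y) − Y·tr(X)) for X,Y ∈ 𝔲(n). Then: (i) ν(X,Y) ∈ 𝔲(n) for all X,Y ∈ 𝔲(n); (ii) ν is antisymmetric and ℝ-bilinear; (iii) ν is Ad U(n)-equivariant: for every unitary g ∈ U(n), ν(gXg⁻¹, gYg⁻¹) = g·ν(X,Y)·g⁻¹; and (iv) for every inner product B on 𝔲(n) satisfying B([X,Y],Z) + B(Y,[X,Z]) = 0 for all X,Y,Z, there exist X, Y ∈ 𝔲(n) with B(ν(X,Y), Y) ≠ 0; that is, ν does not define a metric connection for any biinvariant metric on U(n). -/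
open Matrix

/-- The unitary Lie algebra `𝔲(n)`: anti-hermitian matrices. -/
def unSet (n : ℕ) : Set (Matrix (Fin n) (Fin n) ℂ) :=
  {X | Xᴴ = -X}

/-- Laquer's antisymmetric map `ν(X,Y) = i(X·tr(Y) - Y·tr(X))` on `𝔲(n)`. -/
noncomputable def nuMap (n : ℕ) (X Y : Matrix (Fin n) (Fin n) ℂ) : Matrix (Fin n) (Fin n) ℂ :=
  Complex.I • (Y.trace • X - X.trace • Y)

/-- `ν` maps `𝔲(n) × 𝔲(n)` to `𝔲(n)`, is antisymmetric and `ℝ`-bilinear,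
is `Ad U(n)`-equivariant, and does not define a metric connection for any biinvariant
metric on `U(n)`. -/
theorem nu_equivariant_not_metric (n : ℕ) (hn : 2 ≤ n) :
    -- (i) ν takes values in 𝔲(n)
    (∀ X ∈ unSet n, ∀ Y ∈ unSet n, nuMap n X Y ∈ unSet n) ∧
    -- (ii) ν is antisymmetric and ℝ-bilinear
    (∀ X Y : Matrix (Fin n) (Fin n) ℂ, nuMap n X Y = -nuMap n Y X) ∧
    (∀ X X' Y : Matrix (Fin n) (Fin n) ℂ,
      nuMap n (X + X') Y = nuMap n X Y + nuMap n X' Y) ∧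
    (∀ (r : ℝ) (X Y : Matrix (Fin n) (Fin n) ℂ), nuMap n (r • X) Y = r • nuMap n X Y) ∧
    (∀ X Y Y' : Matrix (Fin n) (Fin n) ℂ,
      nuMap n X (Y + Y') = nuMap n X Y + nuMap n X Y') ∧
    (∀ (r : ℝ) (X Y : Matrix (Fin n) (Fin n) ℂ), nuMap n X (r • Y) = r • nuMap n X Y) ∧
    -- (iii) Ad U(n)-equivariance
    (∀ g : Matrix (Fin n) (Fin n) ℂ, gᴴ * g = 1 →
      ∀ X ∈ unSet n, ∀ Y ∈ unSet n,
        nuMap n (g * X * g⁻¹) (g * Y * g⁻¹) = g * nuMap n X Y * g⁻¹) ∧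
    -- (iv) ν is not metric for any ad-invariant inner product on 𝔲(n)
    (∀ B : Matrix (Fin n) (Fin n) ℂ → Matrix (Fin n) (Fin n) ℂ → ℝ,
      (∀ X X' Y, B (X + X') Y = B X Y + B X' Y) →
      (∀ (r : ℝ) X Y, B (r • X) Y = r * B X Y) →
      (∀ X Y Y', B X (Y + Y') = B X Y + B X Y') →
      (∀ (r : ℝ) X Y, B X (r • Y) = r * B X Y) →
      (∀ X ∈ unSet n, ∀ Y ∈ unSet n, B X Y = B Y X) →
      (∀ X ∈ unSet n, X ≠ 0 → 0 < B X X) →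
      (∀ X ∈ unSet n, ∀ Y ∈ unSet n, ∀ Z ∈ unSet n, B ⁅X, Y⁆ Z + B Y ⁅X, Z⁆ = 0) →
      ∃ X ∈ unSet n, ∃ Y ∈ unSet n, B (nuMap n X Y) Y ≠ 0) := by
  refine ⟨?_, ?_, ?_, ?_, ?_, ?_, ?_, ?_⟩
  · -- (i)
    intro X hX Y hY
    simp only [unSet, Set.mem_setOf_eq] at hX hY ⊢
    have htX : (starRingEnd ℂ) X.trace = -X.trace := by
      rw [← Complex.star_def, ← Matrix.trace_conjTranspose, hX, Matrix.trace_neg]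
    have htY : (starRingEnd ℂ) Y.trace = -Y.trace := by
      rw [← Complex.star_def, ← Matrix.trace_conjTranspose, hY, Matrix.trace_neg]
    simp only [nuMap, Matrix.conjTranspose_smul, Matrix.conjTranspose_sub, hX, hY,
      Complex.star_def, Complex.conj_I, smul_sub, smul_smul, _root_.map_mul, htX, htY,
      neg_smul, smul_neg, neg_neg, mul_neg, neg_mul]
    abel
  · -- antisymmetry
    intro X Y
    simp only [nuMap, smul_sub]
    abel
  · intro X X' Y
    simp only [nuMap, Matrix.trace_add, add_smul, smul_add, smul_sub]
    abel
  · intro r X Y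
    ext a b
    simp [nuMap, Matrix.trace_smul, Complex.real_smul, Matrix.sub_apply, mul_sub]
    ring
  · intro X Y Y'
    simp only [nuMap, Matrix.trace_add, add_smul, smul_add, smul_sub]
    abel
  · intro r X Y
    ext a b
    simp [nuMap, Matrix.trace_smul, Complex.real_smul, Matrix.sub_apply, mul_sub]
    ring
  · -- (iii)
    intro g hg X hX Y hY
    have hstar : star g.det * g.det = 1 := by
      rw [← Matrix.det_conjTranspose, ← Matrix.det_mul, hg, Matrix.det_one]
    have hdet : IsUnit g.det :=
      IsUnit.of_mul_eq_one (a := g.det) (star g.det) (by rw [mul_comm]; exact hstar)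
    have hinv : g⁻¹ * g = 1 := Matrix.nonsing_inv_mul g hdet
    have hinv' : g * g⁻¹ = 1 := Matrix.mul_nonsing_inv g hdet
    have htr : ∀ Z : Matrix (Fin n) (Fin n) ℂ, (g * Z * g⁻¹).trace = Z.trace := by
      intro Z
      rw [Matrix.trace_mul_comm, ← Matrix.mul_assoc, hinv, Matrix.one_mul]
    simp only [nuMap, htr, Matrix.mul_smul, Matrix.smul_mul, Matrix.mul_sub, Matrix.sub_mul,
      mul_smul_comm, smul_mul_assoc]
  · -- (iv)
    intro B hBa1 hBs1 hBa2 hBs2 _hsymm hpos _had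
    have h0 : (0 : ℕ) < n := by omega
    have h1 : (1 : ℕ) < n := by omega
    set i0 : Fin n := ⟨0, h0⟩
    set i1 : Fin n := ⟨1, h1⟩
    have hne : i0 ≠ i1 := by simp [i0, i1, Fin.ext_iff]
    set X : Matrix (Fin n) (Fin n) ℂ := Complex.I • 1 with hXdef
    set Y : Matrix (Fin n) (Fin n) ℂ :=
      Matrix.single i0 i1 1 - Matrix.single i1 i0 1 with hYdef
    have hXmem : X ∈ unSet n := by
      simp [unSet, hXdef, Matrix.conjTranspose_smul, Complex.star_def, Complex.conj_I]
    have hYmem : Y ∈ unSet n := by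
      simp only [unSet, Set.mem_setOf_eq, hYdef]
      ext a b
      simp only [Matrix.conjTranspose_apply, Matrix.sub_apply, Matrix.neg_apply,
        Matrix.single, Matrix.of_apply, apply_ite (star : ℂ → ℂ), star_one, star_zero]
      by_cases ha0 : i0 = a <;> by_cases hb1 : i1 = b <;>
        by_cases ha1 : i1 = a <;> by_cases hb0 : i0 = b <;> simp_all <;> ring
    have htrY : Y.trace = 0 := by
      rw [hYdef, Matrix.trace_sub]
      have t1 : (Matrix.single i0 i1 (1:ℂ)).trace = 0 := by
        apply Finset.sum_eq_zero; intro x _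
        apply Matrix.single_apply_of_ne
        rintro ⟨h, h'⟩; exact hne (h.trans h'.symm)
      have t2 : (Matrix.single i1 i0 (1:ℂ)).trace = 0 := by
        apply Finset.sum_eq_zero; intro x _
        apply Matrix.single_apply_of_ne
        rintro ⟨h, h'⟩; exact hne (h'.trans h.symm)
      rw [t1, t2, sub_zero]
    have htrX : X.trace = Complex.I * n := by
      simp [hXdef, Matrix.trace_smul, Matrix.trace_one, smul_eq_mul]
    have hnu : nuMap n X Y = (n : ℝ) • Y := by
      rw [nuMap, htrY, htrX]
      rw [zero_smul, zero_sub, smul_neg, smul_smul]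
      rw [show Complex.I * (Complex.I * n) = -(n:ℂ) by
        rw [← mul_assoc, Complex.I_mul_I, neg_mul, one_mul]]
      rw [neg_smul, neg_neg]
      ext a b
      simp [Complex.real_smul]
    have hYne : Y ≠ 0 := by
      intro h
      have : Y i0 i1 = 0 := by rw [h]; simp
      rw [hYdef] at this
      simp [Matrix.single_apply_same,
        Matrix.single_apply_of_ne _ _ _ _ _ (by tauto : ¬(i1 = i0 ∧ i0 = i1))] at this
    refine ⟨X, hXmem, Y, hYmem, ?_⟩
    rw [hnu, hBs1]
    have := hpos Y hYmem hYne
    positivity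
end
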